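/- Let r > 0 and t > −1 be real numbers with 2r − t > 2. Then for every point x + iy in Π⁺, ∫_{Π⁺} v^t / |(x−u) + i(y+v)|^{2r} du dv = 4π · Γ(1+t) · Γ(2r−t−2) / (2^{2r} · Γ(r)² · y^{2r−t−2}), where the integral is over all u ∈ ℝ and v > 0. -/

import Mathlib

open MeasureTheory Real Set

lemma beta_integrable_Ioo {a b : ℝ} (ha : 0 < a) (hb : 0 < b) :
    IntegrableOn (fun s : ℝ => s ^ (a-1) * (1-s) ^ (b-1)) (Ioo 0 1) := by
  have h := (Complex.betaIntegral_convergent (u := a) (v := b) (by simpa using ha)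
    (by simpa using hb)).1
  refine ((h.mono_set Ioo_subset_Ioc_self).norm).congr ?_
  refine (ae_restrict_iff' measurableSet_Ioo).2 (ae_of_all _ fun s hs => ?_)
  obtain ⟨hs0, hs1⟩ := hs
  dsimp only
  rw [norm_mul]
  have e1 : ‖(s:ℂ) ^ ((a:ℂ)-1)‖ = s ^ (a-1) := by
    rw [show ((a:ℂ)-1) = ((a-1 : ℝ):ℂ) by push_cast; ring,
      Complex.norm_cpow_eq_rpow_re_of_pos hs0]
    simp
  have e2 : ‖(1-(s:ℂ)) ^ ((b:ℂ)-1)‖ = (1-s) ^ (b-1) := by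
    rw [show (1-(s:ℂ)) = ((1-s : ℝ):ℂ) by push_cast; ring,
      show ((b:ℂ)-1) = ((b-1 : ℝ):ℂ) by push_cast; ring,
      Complex.norm_cpow_eq_rpow_re_of_pos (by linarith)]
    simp
  rw [e1, e2]

lemma beta_Ioo {a b : ℝ} (ha : 0 < a) (hb : 0 < b) :
    ∫ s in Ioo (0:ℝ) 1, s ^ (a-1) * (1-s) ^ (b-1)
      = Gamma a * Gamma b / Gamma (a+b) := by
  have h := Complex.Gamma_mul_Gamma_eq_betaIntegral (s := a) (t := b)
    (by simpa using ha) (by simpa using hb)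
  have hB : Complex.betaIntegral a b
      = ((∫ s in Ioo (0:ℝ) 1, s ^ (a-1) * (1-s) ^ (b-1) : ℝ) : ℂ) := by
    rw [Complex.betaIntegral, intervalIntegral.integral_of_le zero_le_one,
      MeasureTheory.integral_Ioc_eq_integral_Ioo,
      show ((∫ s in Ioo (0:ℝ) 1, s ^ (a-1) * (1-s) ^ (b-1) : ℝ) : ℂ)
        = ∫ s in Ioo (0:ℝ) 1, ((s ^ (a-1) * (1-s) ^ (b-1) : ℝ) : ℂ) from integral_ofReal.symm]
    refine setIntegral_congr_fun measurableSet_Ioo fun s hs => ?_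
    obtain ⟨hs0, hs1⟩ := hs
    rw [show ((a:ℂ)-1) = ((a-1 : ℝ):ℂ) by push_cast; ring,
      show ((b:ℂ)-1) = ((b-1 : ℝ):ℂ) by push_cast; ring,
      ← Complex.ofReal_cpow hs0.le, show (1 - (s:ℂ)) = ((1-s:ℝ):ℂ) by push_cast; ring,
      ← Complex.ofReal_cpow (by linarith)]
    push_cast; ring
  rw [hB, Complex.Gamma_ofReal, Complex.Gamma_ofReal, show ((a:ℂ)+(b:ℂ)) = ((a+b:ℝ):ℂ) by
    push_cast; ring, Complex.Gamma_ofReal] at h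
  have key : Gamma a * Gamma b
      = Gamma (a+b) * ∫ s in Ioo (0:ℝ) 1, s ^ (a-1) * (1-s) ^ (b-1) := by exact_mod_cast h
  have hG : Gamma (a+b) ≠ 0 := (Real.Gamma_pos_of_pos (by linarith)).ne'
  rw [key]; field_simp

section subst
variable {a b : ℝ}

lemma subst_deriv : ∀ x ∈ Ioi (0:ℝ), HasDerivWithinAt (fun x : ℝ => x / (1+x))
    (((1+x)^2)⁻¹) (Ioi 0) x := by
  intro x hx
  have hx1 : (1:ℝ) + x ≠ 0 := by have := mem_Ioi.1 hx; positivity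
  have h := (hasDerivAt_id x).div ((hasDerivAt_id x).const_add 1) hx1
  simp only [id_eq, one_mul, mul_one] at h
  have e : (1 + x - x) / (1+x)^2 = ((1+x)^2)⁻¹ := by field_simp; ring
  rw [e] at h
  exact h.hasDerivWithinAt

lemma subst_inj : InjOn (fun x : ℝ => x / (1+x)) (Ioi 0) := by
  intro p hp q hq h
  have hp' : (1:ℝ) + p ≠ 0 := by have := mem_Ioi.1 hp; positivity
  have hq' : (1:ℝ) + q ≠ 0 := by have := mem_Ioi.1 hq; positivity
  field_simp at h
  linarith

lemma subst_image : (fun x : ℝ => x / (1+x)) '' (Ioi 0) = Ioo 0 1 := by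
  ext s
  constructor
  · rintro ⟨x, hx, rfl⟩
    have hx0 : (0:ℝ) < x := hx
    have hx1 : (0:ℝ) < 1 + x := by linarith
    exact ⟨by positivity, by rw [div_lt_one hx1]; linarith⟩
  · rintro ⟨hs0, hs1⟩
    have h1 : (0:ℝ) < 1 - s := by linarith
    refine ⟨s / (1-s), mem_Ioi.2 (div_pos hs0 h1), ?_⟩
    have h2 : 1 + s / (1-s) = 1/(1-s) := by field_simp; ring
    show s / (1-s) / (1 + s / (1-s)) = s
    rw [h2]; field_simp

lemma subst_pointwise {a b : ℝ} : ∀ x ∈ Ioi (0:ℝ),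
    (|((1+x)^2)⁻¹| • ((fun s : ℝ => s ^ (a-1) * (1-s) ^ (b-1)) (x/(1+x))))
      = x ^ (a-1) * (1+x) ^ (-(a+b)) := by
  intro x hx
  have hx0 : (0:ℝ) < x := hx
  have hx1 : (0:ℝ) < 1 + x := by linarith
  have e1 : (x/(1+x)) ^ (a-1) = x ^ (a-1) * (1+x) ^ (-(a-1)) := by
    rw [div_rpow hx0.le hx1.le, Real.rpow_neg hx1.le, div_eq_mul_inv]
  have e2 : ((1:ℝ) - x/(1+x)) ^ (b-1) = (1+x) ^ (-(b-1)) := by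
    rw [show (1:ℝ) - x/(1+x) = (1+x)⁻¹ by field_simp; ring,
      Real.inv_rpow hx1.le, ← Real.rpow_neg hx1.le]
  have e3 : (((1+x)^2 : ℝ))⁻¹ = (1+x) ^ (-2:ℝ) := by
    rw [← Real.rpow_natCast (1+x) 2, ← Real.rpow_neg hx1.le]
    norm_num
  dsimp only
  rw [smul_eq_mul, abs_of_pos (show (0:ℝ) < ((1+x)^2)⁻¹ by positivity), e1, e2, e3,
    show (1+x) ^ (-2:ℝ) * (x ^ (a-1) * (1+x) ^ (-(a-1)) * (1+x) ^ (-(b-1)))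
      = x ^ (a-1) * ((1+x) ^ (-2:ℝ) * (1+x) ^ (-(a-1)) * (1+x) ^ (-(b-1))) from by ring,
    ← Real.rpow_add hx1, ← Real.rpow_add hx1,
    show (-2:ℝ) + -(a-1) + -(b-1) = -(a+b) from by ring]

lemma beta_Ioi (ha : 0 < a) (hb : 0 < b) :
    ∫ s in Ioi (0:ℝ), s ^ (a-1) * (1+s) ^ (-(a+b))
      = Gamma a * Gamma b / Gamma (a+b) := by
  rw [← beta_Ioo ha hb, ← subst_image,
    integral_image_eq_integral_abs_deriv_smul measurableSet_Ioi subst_deriv subst_inj]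
  exact (setIntegral_congr_fun measurableSet_Ioi fun x hx => (subst_pointwise x hx).symm)

lemma beta_Ioi_integrable (ha : 0 < a) (hb : 0 < b) :
    IntegrableOn (fun s : ℝ => s ^ (a-1) * (1+s) ^ (-(a+b))) (Ioi 0) := by
  have h := (integrableOn_image_iff_integrableOn_abs_deriv_smul measurableSet_Ioi
    subst_deriv subst_inj (fun s : ℝ => s ^ (a-1) * (1-s) ^ (b-1))).1
  rw [subst_image] at h
  refine (h (beta_integrable_Ioo ha hb)).congr ?_
  exact (ae_restrict_iff' measurableSet_Ioi).2 (ae_of_all _ subst_pointwise)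

lemma intJ {r : ℝ} (hr2 : 1/2 < r) :
    ∫ w : ℝ, (1 + w^2) ^ (-r) = √π * Gamma (r - 1/2) / Gamma r := by
  have hb : (0:ℝ) < r - 1/2 := by linarith
  have hbeta := beta_Ioi one_half_pos hb
  have h2 := integral_comp_rpow_Ioi_of_pos
    (g := fun s : ℝ => s ^ ((1:ℝ)/2-1) * (1+s) ^ (-((1:ℝ)/2+(r-1/2)))) (p := 2) two_pos
  have hpt : ∀ x ∈ Ioi (0:ℝ),
      (2 * x ^ ((2:ℝ)-1)) • ((x ^ (2:ℝ)) ^ ((1:ℝ)/2-1) * (1+x ^ (2:ℝ)) ^ (-((1:ℝ)/2+(r-1/2))))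
        = 2 * (1 + x^2) ^ (-r) := by
    intro x hx
    have hx0 : (0:ℝ) < x := hx
    have e0 : x ^ (2:ℝ) = x^2 := by
      rw [← Real.rpow_natCast x 2]; norm_num
    have e1 : (x^2 : ℝ) ^ ((1:ℝ)/2-1) = x⁻¹ := by
      rw [show ((1:ℝ)/2-1) = -(1/2) by norm_num, Real.rpow_neg (sq_nonneg x),
        ← Real.sqrt_eq_rpow, Real.sqrt_sq hx0.le]
    rw [smul_eq_mul, e0, e1, show ((2:ℝ)-1) = 1 by norm_num, Real.rpow_one,
      show (-((1:ℝ)/2+(r-1/2))) = -r by ring]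
    field_simp
  have key : ∫ x in Ioi (0:ℝ), 2 * (1 + x^2) ^ (-r)
      = Gamma (1/2) * Gamma (r-1/2) / Gamma ((1:ℝ)/2 + (r-1/2)) := by
    rw [← hbeta, ← h2]
    exact setIntegral_congr_fun measurableSet_Ioi fun x hx => (hpt x hx).symm
  rw [integral_const_mul] at key
  have habs : ∫ w : ℝ, (1 + w^2) ^ (-r)
      = 2 * ∫ x in Ioi (0:ℝ), (1 + x^2) ^ (-r) := by
    rw [← integral_comp_abs (f := fun x : ℝ => (1 + x^2) ^ (-r))]
    congr 1
    funext w
    rw [sq_abs]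
  rw [habs, key, show ((1:ℝ)/2 + (r-1/2)) = r by ring, Real.Gamma_one_half_eq]

lemma intJ_integrable {r : ℝ} (hr2 : 1/2 < r) :
    Integrable (fun w : ℝ => (1 + w^2) ^ (-r)) := by
  have h := integrable_rpow_neg_one_add_norm_sq (E := ℝ) (μ := volume) (r := 2*r)
    (by simp only [Module.finrank_self, Nat.cast_one]; linarith)
  have e : (fun w : ℝ => (1 + w^2) ^ (-r)) = fun x : ℝ => ((1:ℝ) + ‖x‖^2) ^ (-(2*r)/2) := by
    funext w
    rw [Real.norm_eq_abs, sq_abs, show (-(2*r)/2) = -r by ring]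
  rw [e]
  exact h

lemma intLine {r c : ℝ} (hr2 : 1/2 < r) (hc : 0 < c) (xx : ℝ) :
    ∫ u : ℝ, ((xx-u)^2 + c^2) ^ (-r) = c ^ (1-2*r) * (√π * Gamma (r - 1/2) / Gamma r) := by
  rw [show (fun u : ℝ => ((xx-u)^2 + c^2) ^ (-r))
      = fun u : ℝ => (fun w : ℝ => (w^2 + c^2) ^ (-r)) (xx - u) from rfl,
    integral_sub_left_eq_self (fun w : ℝ => (w^2 + c^2) ^ (-r)) volume xx]
  have hpt : ∀ u : ℝ, (u^2 + c^2) ^ (-r) = c ^ (-(2*r)) * (1 + (u/c)^2) ^ (-r) := by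
    intro u
    have e : u^2 + c^2 = c^2 * (1 + (u/c)^2) := by field_simp; ring
    rw [e, Real.mul_rpow (sq_nonneg c) (by positivity), ← Real.rpow_natCast c 2,
      ← Real.rpow_mul hc.le]
    norm_num
  simp_rw [hpt]
  rw [integral_const_mul, Measure.integral_comp_div (fun u : ℝ => (1 + u^2) ^ (-r)) c,
    intJ hr2, abs_of_pos hc, smul_eq_mul, ← mul_assoc, mul_comm (c ^ (-(2*r))) c,
    ← Real.rpow_one_add' hc.le (show (1:ℝ) + -(2*r) ≠ 0 by intro h; linarith)]
  ring_nf

lemma intLine_integrable {r c : ℝ} (hr2 : 1/2 < r) (hc : 0 < c) (xx : ℝ) :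
    Integrable (fun u : ℝ => ((xx-u)^2 + c^2) ^ (-r)) := by
  have h1 : Integrable (fun u : ℝ => (1 + (u/c)^2) ^ (-r)) :=
    (intJ_integrable hr2).comp_div hc.ne'
  have h2 : Integrable (fun u : ℝ => (u^2 + c^2) ^ (-r)) := by
    refine (h1.const_mul (c ^ (-(2*r)))).congr ?_
    refine ae_of_all _ fun u => ?_
    dsimp only
    symm
    have e : u^2 + c^2 = c^2 * (1 + (u/c)^2) := by field_simp; ring
    rw [e, Real.mul_rpow (sq_nonneg c) (by positivity), ← Real.rpow_natCast c 2,
      ← Real.rpow_mul hc.le]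
    norm_num
  exact h2.comp_sub_left xx

lemma intV_pt {t r y : ℝ} (hy : 0 < y) : ∀ x ∈ Ioi (0:ℝ),
    (fun v : ℝ => v ^ t * (y+v) ^ (1-2*r)) (y*x)
      = y ^ (t+1-2*r) * (x ^ ((t+1)-1) * (1+x) ^ (-((t+1)+(2*r-t-2)))) := by
  intro x hx
  have hx0 : (0:ℝ) < x := hx
  dsimp only
  rw [Real.mul_rpow hy.le hx0.le, show y + y*x = y * (1+x) by ring,
    Real.mul_rpow hy.le (by positivity), show ((t+1)-1 : ℝ) = t by ring,
    show (-((t+1)+(2*r-t-2)) : ℝ) = 1-2*r by ring,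
    show y ^ t * x ^ t * (y ^ (1-2*r) * (1+x) ^ (1-2*r))
      = (y ^ t * y ^ (1-2*r)) * (x ^ t * (1+x) ^ (1-2*r)) from by ring,
    ← Real.rpow_add hy, show (t+(1-2*r) : ℝ) = t+1-2*r by ring]

lemma intV {t r y : ℝ} (ht : -1 < t) (h2 : 2 < 2*r - t) (hy : 0 < y) :
    ∫ v in Ioi (0:ℝ), v ^ t * (y+v) ^ (1-2*r)
      = y ^ (t+2-2*r) * (Gamma (t+1) * Gamma (2*r-t-2) / Gamma (2*r-1)) := by
  have ha : (0:ℝ) < t + 1 := by linarith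
  have hb : (0:ℝ) < 2*r - t - 2 := by linarith
  have hbeta := beta_Ioi ha hb
  have hscale := integral_comp_mul_left_Ioi (fun v : ℝ => v ^ t * (y+v) ^ (1-2*r)) 0 hy
  rw [mul_zero] at hscale
  have h3 : ∫ x in Ioi (0:ℝ), (fun v : ℝ => v ^ t * (y+v) ^ (1-2*r)) (y*x)
      = y ^ (t+1-2*r) * (Gamma (t+1) * Gamma (2*r-t-2) / Gamma ((t+1)+(2*r-t-2))) := by
    rw [setIntegral_congr_fun measurableSet_Ioi (intV_pt hy), integral_const_mul, hbeta]
  rw [h3, smul_eq_mul] at hscale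
  have h4 : ∫ v in Ioi (0:ℝ), v ^ t * (y+v) ^ (1-2*r)
      = y * (y ^ (t+1-2*r) * (Gamma (t+1) * Gamma (2*r-t-2) / Gamma ((t+1)+(2*r-t-2)))) := by
    have hI : ∫ x in Ioi (0:ℝ), (fun v : ℝ => v ^ t * (y+v) ^ (1-2*r)) x
        = ∫ v in Ioi (0:ℝ), v ^ t * (y+v) ^ (1-2*r) := rfl
    rw [hI] at hscale
    rw [hscale]
    field_simp
  rw [h4, ← mul_assoc, ← Real.rpow_one_add' hy.le
    (show (1:ℝ) + (t+1-2*r) ≠ 0 by intro h; linarith),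
    show (1 + (t+1-2*r) : ℝ) = t+2-2*r by ring,
    show ((t+1)+(2*r-t-2) : ℝ) = 2*r-1 by ring]

lemma intV_integrable {t r y : ℝ} (ht : -1 < t) (h2 : 2 < 2*r - t) (hy : 0 < y) :
    IntegrableOn (fun v : ℝ => v ^ t * (y+v) ^ (1-2*r)) (Ioi 0) := by
  have ha : (0:ℝ) < t + 1 := by linarith
  have hb : (0:ℝ) < 2*r - t - 2 := by linarith
  have h := (integrableOn_Ioi_comp_mul_left_iff
    (fun v : ℝ => v ^ t * (y+v) ^ (1-2*r)) 0 hy).1 ?_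
  · rwa [mul_zero] at h
  · refine (((beta_Ioi_integrable ha hb).const_mul (y ^ (t+1-2*r)))).congr ?_
    exact (ae_restrict_iff' measurableSet_Ioi).2
      (ae_of_all _ fun x hx => ((intV_pt hy) x hx).symm)

/-- Explicit evaluation of the Bergman-kernel-type integral on the upper half-plane. -/
theorem bergman_kernel_integral (r t : ℝ) (hr : 0 < r) (ht : -1 < t)
    (hrt : 2 < 2 * r - t) (x y : ℝ) (hy : 0 < y) :
    ∫ p in {p : ℝ × ℝ | 0 < p.2},
        p.2 ^ t / ‖((x - p.1) + (y + p.2) * Complex.I : ℂ)‖ ^ (2 * r)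
      = 4 * π * Real.Gamma (1 + t) * Real.Gamma (2 * r - t - 2) /
          (2 ^ (2 * r) * Real.Gamma r ^ 2 * y ^ (2 * r - t - 2)) := by
  have hr2 : (1:ℝ)/2 < r := by linarith
  set F : ℝ × ℝ → ℝ := fun p => p.2 ^ t * ((x - p.1)^2 + (y + p.2)^2) ^ (-r) with hF
  have hSmeas : MeasurableSet {p : ℝ × ℝ | 0 < p.2} :=
    measurableSet_lt measurable_const measurable_snd
  -- Step 1: rewrite the integrand
  have step1 : ∫ p in {p : ℝ × ℝ | 0 < p.2},
        p.2 ^ t / ‖((x - p.1) + (y + p.2) * Complex.I : ℂ)‖ ^ (2 * r)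
      = ∫ p in {p : ℝ × ℝ | 0 < p.2}, F p := by
    refine setIntegral_congr_fun hSmeas fun p hp => ?_
    have hp2 : (0:ℝ) < p.2 := hp
    have hyp : (0:ℝ) < y + p.2 := by linarith
    have hQ : (0:ℝ) < (x - p.1)^2 + (y + p.2)^2 := by positivity
    have habs : ‖((x - p.1) + (y + p.2) * Complex.I : ℂ)‖
        = Real.sqrt ((x - p.1)^2 + (y + p.2)^2) := by
      rw [show ((x:ℂ) - p.1 + ((y:ℂ) + p.2) * Complex.I)
          = (((x - p.1 : ℝ):ℂ) + ((y + p.2 : ℝ):ℂ) * Complex.I) by push_cast; ring]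
      exact Complex.norm_add_mul_I _ _
    simp only [hF]
    rw [habs, Real.sqrt_eq_rpow, ← Real.rpow_mul hQ.le,
      show (1/2 * (2*r) : ℝ) = r by ring, Real.rpow_neg hQ.le, div_eq_mul_inv]
  rw [step1]
  -- Step 2: product structure
  have hSet : {p : ℝ × ℝ | 0 < p.2} = (univ : Set ℝ) ×ˢ Ioi (0:ℝ) := by
    ext p; simp [Set.mem_prod, mem_Ioi]
  have hmeasF : Measurable F := by fun_prop
  set K : ℝ := √π * Gamma (r - 1/2) / Gamma r with hK
  have hInner : ∀ v ∈ Ioi (0:ℝ), (∫ u, F (u, v))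
      = K * (v ^ t * (y + v) ^ (1 - 2*r)) := by
    intro v hv
    have hv0 : (0:ℝ) < v := hv
    have hyv : (0:ℝ) < y + v := by linarith
    simp only [hF]
    rw [MeasureTheory.integral_const_mul, intLine hr2 hyv x]
    ring
  have hIntLine : ∀ v ∈ Ioi (0:ℝ), Integrable (fun u => F (u, v)) := by
    intro v hv
    have hv0 : (0:ℝ) < v := hv
    have hyv : (0:ℝ) < y + v := by linarith
    simp only [hF]
    exact (intLine_integrable hr2 hyv x).const_mul _
  have hInt : Integrable F ((volume : Measure ℝ).prod ((volume : Measure ℝ).restrict (Ioi 0))) := by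
    rw [integrable_prod_iff' (hmeasF.aestronglyMeasurable)]
    constructor
    · exact (ae_restrict_iff' measurableSet_Ioi).2 (ae_of_all _ hIntLine)
    · refine (((intV_integrable ht hrt hy).const_mul K)).congr ?_
      refine (ae_restrict_iff' measurableSet_Ioi).2 (ae_of_all _ fun v hv => ?_)
      have hv0 : (0:ℝ) < v := hv
      have hnorm : ∀ u : ℝ, ‖F (u, v)‖ = F (u, v) := by
        intro u
        refine Real.norm_of_nonneg ?_
        have : (0:ℝ) ≤ v ^ t := Real.rpow_nonneg hv0.le t
        have : (0:ℝ) ≤ ((x - u)^2 + (y + v)^2) ^ (-r) := Real.rpow_nonneg (by positivity) _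
        positivity
      simp only [hnorm]
      exact (hInner v hv).symm
  have hprod : ((volume : Measure (ℝ × ℝ))).restrict ((univ : Set ℝ) ×ˢ Ioi (0:ℝ))
      = ((volume : Measure ℝ).restrict univ).prod ((volume : Measure ℝ).restrict (Ioi 0)) := by
    rw [Measure.prod_restrict, ← Measure.volume_eq_prod]
  have step2 : ∫ p in {p : ℝ × ℝ | 0 < p.2}, F p
      = ∫ v in Ioi (0:ℝ), ∫ u, F (u, v) := by
    rw [hSet, hprod, Measure.restrict_univ]
    exact MeasureTheory.integral_prod_symm F hInt
  rw [step2, setIntegral_congr_fun measurableSet_Ioi hInner,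
    MeasureTheory.integral_const_mul, intV ht hrt hy]
  -- Step 3: arithmetic
  have hdup : Gamma (r - 1/2) * Gamma r = Gamma (2*r-1) * 2 ^ (2-2*r) * √π := by
    have h := Real.Gamma_mul_Gamma_add_half (r - 1/2)
    rw [show (r - 1/2 + 1/2 : ℝ) = r by ring] at h
    rw [show (2*(r-1/2) : ℝ) = 2*r-1 by ring] at h
    rw [show (1-(2*r-1) : ℝ) = 2-2*r by ring] at h
    exact h
  have hGr : Gamma r ≠ 0 := (Real.Gamma_pos_of_pos hr).ne'
  have hG3 : Gamma (2*r-1) ≠ 0 := (Real.Gamma_pos_of_pos (by linarith)).ne'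
  have hyp : y ^ (2*r-t-2) ≠ 0 := (Real.rpow_pos_of_pos hy _).ne'
  have h2p : (2:ℝ) ^ (2*r) ≠ 0 := (Real.rpow_pos_of_pos two_pos _).ne'
  have hy2 : y ^ (t+2-2*r) = (y ^ (2*r-t-2))⁻¹ := by
    rw [← Real.rpow_neg hy.le, show (-(2*r-t-2) : ℝ) = t+2-2*r by ring]
  have h2pow : (2:ℝ) ^ ((2:ℝ)-2*r) * 2 ^ (2*r) = 4 := by
    rw [← Real.rpow_add two_pos]; norm_num
  have hsq : √π * √π = π := Real.mul_self_sqrt pi_pos.le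
  have hG2 : Gamma (r - 1/2) = Gamma (2*r-1) * 2 ^ (2-2*r) * √π / Gamma r := by
    exact eq_div_of_mul_eq hGr hdup
  rw [show (1 + t : ℝ) = t + 1 by ring, hK, hG2, hy2]
  field_simp
  rw [show (2:ℝ) * (1 - r) = 2 - 2*r by ring]
  linear_combination (√π * √π * (Real.Gamma (t+1) * Real.Gamma (2*r-t-2))) * h2pow
    + (4 * (Real.Gamma (t+1) * Real.Gamma (2*r-t-2))) * hsq
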